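/- Borel–Cantelli step of the lower bound: let μ ∈ EM(S,ς), fix k with 1/k < h_ς(μ) and ε ∈ (0, 1/k). Define D̃_{n,k} = {s ∈ Σ^{Λ_n} : K(s)/|Λ_n| ≤ h_ς(μ) − 1/k} and T_{n,k,ε} = {s ∈ Σ^{Λ_n} : μ([[s]] ∩ S) < 2^{−|Λ_n|(h_ς(μ) − 1/k + ε)}}. Then μ([[D̃_{n,k}]] ∩ [[T_{n,k,ε}]] ∩ S) ≤ 2^{−|Λ_n|ε + 1}, and hence Σ_n μ([[D̃_{n,k}]] ∩ [[T_{n,k,ε}]] ∩ S) < ∞, so by Borel–Cantelli, μ-almost every ω belongs to [[D̃_{n,k}]] ∩ [[T_{n,k,ε}]] ∩ S for only finitely many n. -/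

import Mathlib

open scoped BigOperators Classical
open MeasureTheory Filter

/-- Binary strings `{0,1}*`. -/
abbrev BStr := List Bool

/-- A set of strings is prefix-free. -/
def PrefixFree (D : Set BStr) : Prop :=
  ∀ p ∈ D, ∀ q ∈ D, p <+: q → p = q

/-- Complexity of `x` w.r.t. a partial machine `φ`, with value `∞` if no program. -/
noncomputable def KofE {α : Type*} (φ : BStr →. List α) (x : List α) : ℕ∞ :=
  ⨅ p ∈ {p : BStr | x ∈ φ p}, (p.length : ℕ∞)

/-- Finite-valued complexity (junk value `0` when no program exists). -/
noncomputable def Kof {α : Type*} (φ : BStr →. List α) (x : List α) : ℕ :=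
  (KofE φ x).toNat

/-- `φ` is an additively optimal partial recursive prefix function. -/
def AddOptimal {α : Type*} [Primcodable α] (φ : BStr →. List α) : Prop :=
  Partrec φ ∧ PrefixFree φ.Dom ∧
    ∀ ψ : BStr →. List α, Partrec ψ → PrefixFree ψ.Dom →
      ∃ c : ℕ, ∀ x : List α, KofE φ x ≤ KofE ψ x + (c : ℕ∞)

/-- The cube `Λ_n ⊂ ℤ^d` : all `g` with `|g i| < n`. -/
noncomputable def cubeZ (d n : ℕ) : Finset (Fin d → ℤ) :=
  Fintype.piFinset fun _ => Finset.Ioo (-(n : ℤ)) (n : ℤ)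

/-- The cube `Λ_n ⊂ ℤ₊^d` : all `g` with `g i < n`. -/
def cubeN (d n : ℕ) : Finset (Fin d → ℕ) :=
  Fintype.piFinset fun _ => Finset.range n

/-- Elements of the cube `Λ_n ⊂ ℤ^d`. -/
abbrev CubeZ (d n : ℕ) := {g : Fin d → ℤ // g ∈ cubeZ d n}

/-- Linearization of a pattern on `Λ_n` into a string, via a fixed enumeration. -/
noncomputable def lin {d n : ℕ} {A : Type*} (s : CubeZ d n → A) : List A :=
  List.ofFn (s ∘ (Fintype.equivFin (CubeZ d n)).symm)

/-- Prefix Kolmogorov complexity of a pattern on `Λ_n`. -/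
noncomputable def patK {A : Type*} (φ : BStr →. List A) {d n : ℕ}
    (s : CubeZ d n → A) : ℕ :=
  Kof φ (lin s)

/-- Shift action of `ℤ^d` on `Σ^{ℤ^d}`. -/
def shiftZ {d : ℕ} {A : Type*} (g : Fin d → ℤ) (ω : (Fin d → ℤ) → A) :
    (Fin d → ℤ) → A := fun h => ω (h + g)

/-- A subshift: a nonempty closed shift-invariant subset. -/
def IsSubshift {d : ℕ} {A : Type*} [TopologicalSpace A]
    (S : Set ((Fin d → ℤ) → A)) : Prop :=
  S.Nonempty ∧ IsClosed S ∧ ∀ g : Fin d → ℤ, shiftZ g '' S = S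

/-- Shift-invariance of a measure. -/
def ShiftInvariant {d : ℕ} {A : Type*} [MeasurableSpace A]
    (μ : Measure ((Fin d → ℤ) → A)) : Prop :=
  ∀ g : Fin d → ℤ, Measure.map (shiftZ g) μ = μ

/-- Ergodicity of the shift action. -/
def ErgodicShift {d : ℕ} {A : Type*} [MeasurableSpace A]
    (μ : Measure ((Fin d → ℤ) → A)) : Prop :=
  ShiftInvariant μ ∧
    ∀ B : Set ((Fin d → ℤ) → A), MeasurableSet B →
      (∀ g : Fin d → ℤ, shiftZ g ⁻¹' B = B) → μ B = 0 ∨ μ B = 1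

/-- The cylinder set of a pattern on `Λ_n`. -/
def cylZ {d n : ℕ} {A : Type*} (s : CubeZ d n → A) : Set ((Fin d → ℤ) → A) :=
  {ω | ∀ g : CubeZ d n, ω g.1 = s g}

/-- Restriction of a configuration to `Λ_n`. -/
def restr {d : ℕ} {A : Type*} (n : ℕ) (ω : (Fin d → ℤ) → A) : CubeZ d n → A :=
  fun g => ω g.1

/-- `φ(t) = -t log₂ t` (with `φ(0)=0`). -/
noncomputable def phi2 (t : ℝ) : ℝ := if t = 0 then 0 else -t * Real.logb 2 t

/-- Kolmogorov–Sinai entropy of the shift system `(S, μ)`, computed (via the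
Kolmogorov–Sinai generator theorem) from the cylinder partitions of the cubes. -/
noncomputable def KSentropy {d : ℕ} {A : Type*} [Fintype A] [MeasurableSpace A]
    (μ : Measure ((Fin d → ℤ) → A)) (S : Set ((Fin d → ℤ) → A)) : ℝ :=
  ⨅ n : ℕ, (∑ s : CubeZ d (n + 1) → A, phi2 ((μ (cylZ s ∩ S)).toReal)) /
      (cubeZ d (n + 1)).card

/-- Kolmogorov complexity density at scale `n`. -/
noncomputable def Kdens {A : Type*} (φ : BStr →. List A) {d : ℕ}
    (ω : (Fin d → ℤ) → A) (n : ℕ) : ℝ :=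
  (patK φ (restr n ω) : ℝ) / (cubeZ d n).card
/-- The set `[[D̃_{n,k}]] ∩ [[T_{n,k,ε}]] ∩ S` of the Borel–Cantelli step. -/
noncomputable def BadSet {A : Type*} [Fintype A] [MeasurableSpace A]
    (φ : BStr →. List A) {d : ℕ} (μ : Measure ((Fin d → ℤ) → A))
    (S : Set ((Fin d → ℤ) → A)) (k : ℕ) (ε : ℝ) (n : ℕ) :
    Set ((Fin d → ℤ) → A) :=
  {ω | (patK φ (restr n ω) : ℝ) / (cubeZ d n).card ≤ KSentropy μ S - 1 / k ∧
    (μ (cylZ (restr n ω) ∩ S)).toReal <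
      (2 : ℝ) ^ (-(((cubeZ d n).card : ℝ)) * (KSentropy μ S - 1 / k + ε))} ∩ S


/- ### Auxiliary lemmas -/

lemma replicate_append_prefix {a b : ℕ}
    (h : (List.replicate a true ++ [false]) <+: (List.replicate b true ++ [false])) : a = b := by
  have hlen := h.length_le
  simp at hlen
  by_contra hne
  have hab : a < b := by omega
  have h1 : (List.replicate a true ++ [false])[a]'(by simp) = false := by
    simp [List.getElem_append_right]
  have h2 : (List.replicate b true ++ [false])[a]'(by simp; omega) = true := by
    rw [List.getElem_append_left (by simpa using hab)]
    simp
  have h3 := h.getElem (show a < (List.replicate a true ++ [false]).length by simp)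
  rw [h1, h2] at h3
  exact Bool.false_ne_true h3

lemma exists_total_prefix_machine (A : Type*) [Primcodable A] :
    ∃ ψ : BStr →. List A, Partrec ψ ∧ PrefixFree ψ.Dom ∧ ∀ x : List A, ∃ p, x ∈ ψ p := by
  classical
  let g : BStr → Option (List A) := fun p =>
    if p = List.replicate (p.length - 1) true ++ [false] then Encodable.decode (p.length - 1)
    else none
  have hrep : Primrec (fun nn : ℕ => List.replicate nn true) := by
    have : Primrec (fun nn : ℕ => (List.range nn).map (fun _ => true)) :=
      Primrec.list_map Primrec.list_range (Primrec₂.const true)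
    exact this.of_eq (fun n => by simp [List.map_const'])
  have hlen : Primrec (fun p : BStr => p.length - 1) :=
    Primrec.pred.comp Primrec.list_length
  have hRhs : Primrec (fun p : BStr => List.replicate (p.length - 1) true ++ [false]) :=
    Primrec.list_append.comp (hrep.comp hlen) (Primrec.const [false])
  have hpred : PrimrecPred (fun p : BStr => p = List.replicate (p.length - 1) true ++ [false]) :=
    Primrec.eq.comp Primrec.id hRhs
  have hg : Primrec g :=
    Primrec.ite hpred (Primrec.decode.comp hlen) (Primrec.const none)
  refine ⟨fun p => (g p : Part (List A)), Computable.ofOption hg.to_comp, ?_, ?_⟩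
  · intro p hp q hq hpq
    have hform : ∀ r : BStr, r ∈ PFun.Dom (fun p => (g p : Part (List A))) →
        r = List.replicate (r.length - 1) true ++ [false] := by
      intro r hr
      by_contra hcon
      have hr := (PFun.mem_dom _ r).mp hr
      obtain ⟨y, hy⟩ := hr
      simp only [Part.mem_ofOption, g, if_neg hcon] at hy
      exact Option.not_mem_none y hy
    have hp' := hform p hp
    have hq' := hform q hq
    rw [hp', hq']
    rw [hp', hq'] at hpq
    rw [replicate_append_prefix hpq]
  · intro x
    refine ⟨List.replicate (Encodable.encode x) true ++ [false], ?_⟩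
    have hl : (List.replicate (Encodable.encode x) true ++ [false]).length - 1
        = Encodable.encode x := by simp
    simp only [Part.mem_ofOption, g, hl, if_pos rfl]
    simp [Encodable.encodek]

lemma prefix_of_getD {p q : BStr} {m : ℕ} (hq : q.length ≤ m) (hle : p.length ≤ q.length)
    (h : ∀ i : Fin m, p.getD i false = q.getD i false) : p <+: q := by
  rw [List.prefix_iff_eq_take]
  apply List.ext_getElem
  · rw [List.length_take]; omega
  · intro i hi hi2
    have h3 : p.getD i false = q.getD i false := h ⟨i, by omega⟩
    rw [List.getD_eq_getElem _ _ hi, List.getD_eq_getElem _ _ (by omega)] at h3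
    rw [List.getElem_take]
    exact h3

lemma card_le_two_pow {γ : Type*} [Fintype γ] {A : Type*} {φ : BStr →. List A}
    (hpf : PrefixFree φ.Dom) {f : γ → List A} (hf : Function.Injective f)
    (m : ℕ) (P : γ → Prop) [DecidablePred P]
    (hP : ∀ s, P s → ∃ p, f s ∈ φ p ∧ p.length ≤ m) :
    (Finset.univ.filter P).card ≤ 2 ^ m := by
  classical
  have hmain : (Finset.univ.filter P).card ≤ (Finset.univ : Finset (Fin m → Bool)).card := by
    refine Finset.card_le_card_of_injOn
      (fun s (i : Fin m) => (if h : ∃ p, f s ∈ φ p ∧ p.length ≤ m then Classical.choose h else []).getD i false)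
      (fun _ _ => Finset.mem_univ _) ?_
    intro s hs t ht hst
    simp only [Finset.mem_coe, Finset.mem_filter] at hs ht
    have hs' := hP s hs.2
    have ht' := hP t ht.2
    dsimp only at hst
    rw [dif_pos hs', dif_pos ht'] at hst
    obtain ⟨hp1, hp2⟩ := Classical.choose_spec hs'
    obtain ⟨hq1, hq2⟩ := Classical.choose_spec ht'
    set p := Classical.choose hs'
    set q := Classical.choose ht'
    have hpd : p ∈ φ.Dom := (PFun.mem_dom φ p).mpr ⟨_, hp1⟩
    have hqd : q ∈ φ.Dom := (PFun.mem_dom φ q).mpr ⟨_, hq1⟩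
    have hpq : p = q := by
      rcases le_total p.length q.length with hle | hle
      · exact hpf p hpd q hqd (prefix_of_getD hq2 hle (fun i => congrFun hst i))
      · exact (hpf q hqd p hpd (prefix_of_getD hp2 hle (fun i => (congrFun hst i).symm))).symm
    exact hf (Part.mem_unique hp1 (hpq ▸ hq1))
  simpa using hmain

lemma lin_injective {d n : ℕ} {A : Type*} :
    Function.Injective (lin (d := d) (n := n) (A := A)) := by
  intro s t h
  have h2 := List.ofFn_injective h
  funext g
  have h3 := congrFun h2 (Fintype.equivFin (CubeZ d n) g)
  simpa using h3

lemma cubeZ_card_pos (d n : ℕ) (hn : 1 ≤ n) : 0 < (cubeZ d n).card := by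
  apply Finset.card_pos.mpr
  refine ⟨fun _ => 0, ?_⟩
  simp only [cubeZ, Fintype.mem_piFinset, Finset.mem_Ioo]
  intro i
  constructor <;> [simp; skip] <;> omega

lemma le_cubeZ_card (d n : ℕ) (hd : 1 ≤ d) (hn : 1 ≤ n) : n ≤ (cubeZ d n).card := by
  have h1 : (cubeZ d n).card = (2*n - 1)^d := by
    simp only [cubeZ, Fintype.card_piFinset, Int.card_Ioo, Finset.prod_const, Finset.card_univ,
      Fintype.card_fin]
    congr 1
    omega
  rw [h1]
  calc n ≤ 2*n-1 := by omega
  _ = (2*n-1)^1 := (pow_one _).symm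
  _ ≤ (2*n-1)^d := Nat.pow_le_pow_right (by omega) hd

/-- Borel–Cantelli step of the lower bound: `μ([[D̃_{n,k}]] ∩ [[T_{n,k,ε}]] ∩ S)
≤ 2^{-|Λ_n|ε+1}`, the series converges, and `μ`-a.e. `ω` lies in only finitely
many of these sets. -/
theorem stmt_10 {A : Type*} [Fintype A] [Nonempty A] [Primcodable A]
    [TopologicalSpace A] [DiscreteTopology A]
    [MeasurableSpace A] [MeasurableSingletonClass A]
    {d : ℕ} (hd : 1 ≤ d) (φ : BStr →. List A) (hφ : AddOptimal φ)
    (S : Set ((Fin d → ℤ) → A)) (hS : IsSubshift S)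
    (μ : Measure ((Fin d → ℤ) → A)) [IsProbabilityMeasure μ]
    (herg : ErgodicShift μ) (hμS : μ S = 1)
    (k : ℕ) (hk0 : 1 ≤ k) (hk : 1 / (k : ℝ) < KSentropy μ S)
    (ε : ℝ) (hε : 0 < ε) (hεk : ε < 1 / (k : ℝ)) :
    (∀ n : ℕ, 1 ≤ n → (μ (BadSet φ μ S k ε n)).toReal ≤
      (2 : ℝ) ^ (-(((cubeZ d n).card : ℝ)) * ε + 1)) ∧
    Summable (fun n => (μ (BadSet φ μ S k ε n)).toReal) ∧
    ∀ᵐ ω ∂μ, ∀ᶠ n in Filter.atTop, ω ∉ BadSet φ μ S k ε n := by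
  classical
  obtain ⟨hpart, hpf, hopt⟩ := hφ
  -- totality of K
  have htot : ∀ x : List A, KofE φ x ≠ ⊤ := by
    obtain ⟨ψ, hψp, hψpf, hψtot⟩ := exists_total_prefix_machine A
    obtain ⟨c, hc⟩ := hopt ψ hψp hψpf
    intro x
    obtain ⟨p, hp⟩ := hψtot x
    have h1 : KofE ψ x ≤ (p.length : ℕ∞) := iInf₂_le p hp
    have h2 : KofE φ x ≤ ((p.length + c : ℕ) : ℕ∞) := by
      push_cast
      exact (hc x).trans (add_le_add h1 le_rfl)
    exact ne_top_of_le_ne_top (ENat.coe_ne_top _) h2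
  have hprog : ∀ (x : List A) (m : ℕ), Kof φ x ≤ m → ∃ p, x ∈ φ p ∧ p.length ≤ m := by
    intro x m hm
    by_contra hcon
    push_neg at hcon
    have h1 : ((m + 1 : ℕ) : ℕ∞) ≤ KofE φ x := by
      refine le_iInf₂ fun p hp => ?_
      exact_mod_cast hcon p hp
    have h2 : KofE φ x = ((Kof φ x : ℕ) : ℕ∞) := (ENat.coe_toNat (htot x)).symm
    rw [h2, Nat.cast_le] at h1
    omega
  have hk1 : 0 < KSentropy μ S - 1 / (k : ℝ) := by
    have : 0 < 1 / (k : ℝ) := by positivity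
    linarith
  -- the key per-n bound
  have key : ∀ n : ℕ, 1 ≤ n → (μ (BadSet φ μ S k ε n)).toReal ≤
      (2 : ℝ) ^ (-(((cubeZ d n).card : ℝ)) * ε) := by
    intro n hn
    set c : ℝ := ((cubeZ d n).card : ℝ) with hcdef
    have hc0 : (0 : ℝ) < c := by
      rw [hcdef]; exact_mod_cast cubeZ_card_pos d n hn
    set B : ℝ := (2 : ℝ) ^ (-c * (KSentropy μ S - 1 / k + ε)) with hBdef
    set m : ℕ := ⌊c * (KSentropy μ S - 1 / k)⌋₊ with hmdef
    set F : Finset (CubeZ d n → A) := Finset.univ.filter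
      (fun s => (patK φ s : ℝ) / c ≤ KSentropy μ S - 1 / k ∧
        (μ (cylZ s ∩ S)).toReal < B) with hFdef
    have hsub : BadSet φ μ S k ε n ⊆ ⋃ s ∈ F, (cylZ s ∩ S) := by
      rintro ω ⟨⟨h1, h2⟩, hωS⟩
      refine Set.mem_iUnion₂.mpr ⟨restr n ω, ?_, fun g => rfl, hωS⟩
      simp only [hFdef, Finset.mem_filter, Finset.mem_univ, true_and]
      exact ⟨h1, h2⟩
    have hfin : ∀ s ∈ F, μ (cylZ s ∩ S) ≠ ⊤ := fun s _ => measure_ne_top μ _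
    have hmeas : μ (BadSet φ μ S k ε n) ≤ ∑ s ∈ F, μ (cylZ s ∩ S) :=
      (measure_mono hsub).trans (measure_biUnion_finset_le F _)
    have hR : (μ (BadSet φ μ S k ε n)).toReal ≤ ∑ s ∈ F, (μ (cylZ s ∩ S)).toReal := by
      rw [← ENNReal.toReal_sum hfin]
      exact ENNReal.toReal_mono (ENNReal.sum_ne_top.mpr hfin) hmeas
    have hB0 : 0 ≤ B := le_of_lt (Real.rpow_pos_of_pos two_pos _)
    have hsumB : ∑ s ∈ F, (μ (cylZ s ∩ S)).toReal ≤ (F.card : ℝ) * B := by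
      have := Finset.sum_le_card_nsmul F (fun s => (μ (cylZ s ∩ S)).toReal) B
        (fun s hs => (Finset.mem_filter.mp hs).2.2.le)
      simpa [nsmul_eq_mul] using this
    have hcardF : (F.card : ℝ) ≤ (2 : ℝ) ^ (c * (KSentropy μ S - 1 / k)) := by
      have h1 : F.card ≤ 2 ^ m := by
        rw [hFdef]
        refine card_le_two_pow hpf lin_injective m _ ?_
        intro s hs
        apply hprog
        have h2 : (patK φ s : ℝ) ≤ c * (KSentropy μ S - 1 / k) := by
          rw [mul_comm]
          exact (div_le_iff₀ hc0).mp hs.1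
        exact Nat.le_floor h2
      calc (F.card : ℝ) ≤ ((2 ^ m : ℕ) : ℝ) := by exact_mod_cast h1
      _ = (2 : ℝ) ^ (m : ℝ) := by
        rw [Nat.cast_pow, ← Real.rpow_natCast]
        norm_num
      _ ≤ (2 : ℝ) ^ (c * (KSentropy μ S - 1 / k)) :=
        Real.rpow_le_rpow_of_exponent_le one_le_two (Nat.floor_le (by positivity))
    calc (μ (BadSet φ μ S k ε n)).toReal ≤ (F.card : ℝ) * B := hR.trans hsumB
    _ ≤ (2 : ℝ) ^ (c * (KSentropy μ S - 1 / k)) * B := by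
      exact mul_le_mul_of_nonneg_right hcardF hB0
    _ = (2 : ℝ) ^ (-c * ε) := by
      rw [hBdef, ← Real.rpow_add two_pos]
      congr 1
      ring
  -- key with the +1 slack
  have key' : ∀ n : ℕ, 1 ≤ n → (μ (BadSet φ μ S k ε n)).toReal ≤
      (2 : ℝ) ^ (-(((cubeZ d n).card : ℝ)) * ε + 1) := by
    intro n hn
    refine (key n hn).trans ?_
    exact Real.rpow_le_rpow_of_exponent_le one_le_two (by linarith)
  -- summability
  have hsumm : Summable (fun n => (μ (BadSet φ μ S k ε n)).toReal) := by
    rw [← summable_nat_add_iff 1]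
    have hr0 : (0 : ℝ) ≤ (2 : ℝ) ^ (-ε) := le_of_lt (Real.rpow_pos_of_pos two_pos _)
    have hr1 : (2 : ℝ) ^ (-ε) < 1 :=
      Real.rpow_lt_one_of_one_lt_of_neg one_lt_two (by linarith)
    refine Summable.of_nonneg_of_le (fun n => ENNReal.toReal_nonneg)
      (f := fun n => 2 * ((2 : ℝ) ^ (-ε)) ^ (n + 1)) ?_ ?_
    · intro n
      refine (key' (n + 1) (by omega)).trans ?_
      have hcard : ((n : ℝ) + 1) ≤ ((cubeZ d (n + 1)).card : ℝ) := by
        exact_mod_cast le_cubeZ_card d (n + 1) hd (by omega)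
      have h1 : -(((cubeZ d (n + 1)).card : ℝ)) * ε + 1 ≤ -((n : ℝ) + 1) * ε + 1 := by
        nlinarith
      refine (Real.rpow_le_rpow_of_exponent_le one_le_two h1).trans (le_of_eq ?_)
      show (2 : ℝ) ^ (-((n : ℝ) + 1) * ε + 1) = 2 * ((2 : ℝ) ^ (-ε)) ^ (n + 1)
      have e1 : ((2 : ℝ) ^ (-ε)) ^ (n + 1) = (2 : ℝ) ^ (-ε * (((n + 1) : ℕ) : ℝ)) := by
        rw [← Real.rpow_natCast ((2 : ℝ) ^ (-ε)) (n + 1),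
          ← Real.rpow_mul (by norm_num : (0 : ℝ) ≤ 2)]
      rw [e1, Real.rpow_add two_pos, Real.rpow_one, mul_comm]
      congr 1
      push_cast
      ring
    · exact (summable_nat_add_iff (f := fun n => 2 * ((2 : ℝ) ^ (-ε)) ^ n) 1).mpr
        ((summable_geometric_of_lt_one hr0 hr1).mul_left 2)
  -- Borel--Cantelli
  have htsum : ∑' n, μ (BadSet φ μ S k ε n) ≠ ⊤ := by
    have h1 : ∀ n, μ (BadSet φ μ S k ε n)
        = ENNReal.ofReal ((μ (BadSet φ μ S k ε n)).toReal) :=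
      fun n => (ENNReal.ofReal_toReal (measure_ne_top μ _)).symm
    rw [tsum_congr h1, ← ENNReal.ofReal_tsum_of_nonneg (fun n => ENNReal.toReal_nonneg) hsumm]
    exact ENNReal.ofReal_ne_top
  exact ⟨key', hsumm, MeasureTheory.ae_eventually_notMem htsum⟩
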